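/- Let V be the 6-dimensional space of quadratic forms in 3 variables over a field K with char K ∉ {2}, acted on by SL₃(ℤ). If U ⊆ V is a nonzero subspace invariant under all diagonal sign matrices diag(±1,±1,±1) of determinant 1 and under the squares of all elementary matrices Eᵢⱼ(1), then U = V. -/

import Mathlib

open Matrix MvPolynomial


/-- Substitution action of a matrix `M` on polynomials: `xᵢ ↦ ∑ⱼ Mᵢⱼ xⱼ`. -/
noncomputable def subst {K : Type*} [CommRing K] (M : Matrix (Fin 3) (Fin 3) ℤ) :
    MvPolynomial (Fin 3) K →ₐ[K] MvPolynomial (Fin 3) K :=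
  MvPolynomial.aeval fun i => ∑ j, (M i j : K) • MvPolynomial.X j

/-- The reduction map `SL₃(ℤ) → SL₃(ℤ/2)`. -/
def red2 : Matrix.SpecialLinearGroup (Fin 3) ℤ →* Matrix.SpecialLinearGroup (Fin 3) (ZMod 2) :=
  Matrix.SpecialLinearGroup.map (Int.castRingHom (ZMod 2))

/-- The level-2 principal congruence subgroup `A ≤ SL₃(ℤ)`. -/
def congr2 : Subgroup (Matrix.SpecialLinearGroup (Fin 3) ℤ) := red2.ker

/-! ### Auxiliary material -/

noncomputable def Dx (i : Fin 3) : Fin 3 →₀ ℕ := Finsupp.single i 2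
/-- Exponent of `xᵢxⱼ`. -/
noncomputable def Ex (i j : Fin 3) : Fin 3 →₀ ℕ := Finsupp.single i 1 + Finsupp.single j 1

section Aux
variable {K : Type*} [CommRing K]

lemma finsupp3_eq_iff (f g : Fin 3 →₀ ℕ) : f = g ↔ (f 0 = g 0 ∧ f 1 = g 1 ∧ f 2 = g 2) := by
  constructor
  · rintro rfl; exact ⟨rfl, rfl, rfl⟩
  · rintro ⟨h0, h1, h2⟩; ext a; fin_cases a <;> assumption

lemma hom_support {p : MvPolynomial (Fin 3) K} (h : p.IsHomogeneous 2) {d : Fin 3 →₀ ℕ}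
    (hd : coeff d p ≠ 0) :
    d = Ex 0 1 ∨ d = Ex 0 2 ∨ d = Ex 1 2 ∨ d = Dx 0 ∨ d = Dx 1 ∨ d = Dx 2 := by
  have h2 := h hd
  have hsum : d 0 + d 1 + d 2 = 2 := by
    simpa [Finsupp.weight_apply, Finsupp.sum_fintype, Fin.sum_univ_three] using h2
  have hc : (d 0 = 1 ∧ d 1 = 1 ∧ d 2 = 0) ∨ (d 0 = 1 ∧ d 1 = 0 ∧ d 2 = 1) ∨
      (d 0 = 0 ∧ d 1 = 1 ∧ d 2 = 1) ∨ (d 0 = 2 ∧ d 1 = 0 ∧ d 2 = 0) ∨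
      (d 0 = 0 ∧ d 1 = 2 ∧ d 2 = 0) ∨ (d 0 = 0 ∧ d 1 = 0 ∧ d 2 = 2) := by omega
  rcases hc with h|h|h|h|h|h
  · exact Or.inl (by rw [finsupp3_eq_iff]; simp [Ex, Finsupp.single_apply, h])
  · exact Or.inr (Or.inl (by rw [finsupp3_eq_iff]; simp [Ex, Finsupp.single_apply, h]))
  · exact Or.inr (Or.inr (Or.inl (by rw [finsupp3_eq_iff]; simp [Ex, Finsupp.single_apply, h])))
  · exact Or.inr (Or.inr (Or.inr (Or.inl (by rw [finsupp3_eq_iff]; simp [Dx, Finsupp.single_apply, h]))))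
  · exact Or.inr (Or.inr (Or.inr (Or.inr (Or.inl (by rw [finsupp3_eq_iff]; simp [Dx, Finsupp.single_apply, h])))))
  · exact Or.inr (Or.inr (Or.inr (Or.inr (Or.inr (by rw [finsupp3_eq_iff]; simp [Dx, Finsupp.single_apply, h])))))

lemma diag_X (s : Fin 3 → ℤ) (i : Fin 3) :
    subst (K := K) (Matrix.diagonal s) (X i) = C (s i : K) * X i := by
  rw [show subst (K := K) (Matrix.diagonal s) (X i)
      = ∑ j, ((Matrix.diagonal s) i j : K) • X j from aeval_X _ i, Fin.sum_univ_three]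
  fin_cases i <;> simp [Matrix.diagonal_apply, smul_eq_C_mul]

lemma coeff_subst_diag (s : Fin 3 → ℤ) (p : MvPolynomial (Fin 3) K) (d : Fin 3 →₀ ℕ) :
    coeff d (subst (Matrix.diagonal s) p) =
      ((s 0 : K) ^ (d 0) * (s 1 : K) ^ (d 1) * (s 2 : K) ^ (d 2)) * coeff d p := by
  induction p using MvPolynomial.induction_on' with
  | add p q hp hq => simp [map_add, hp, hq]; ring
  | monomial u a =>
      have : subst (K := K) (Matrix.diagonal s) (monomial u a)
          = C ((s 0 : K) ^ (u 0) * (s 1 : K) ^ (u 1) * (s 2 : K) ^ (u 2)) * monomial u a := by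
        rw [show (monomial u a : MvPolynomial (Fin 3) K)
            = C a * (X 0 ^ u 0 * X 1 ^ u 1 * X 2 ^ u 2) by
          rw [monomial_eq, Finsupp.prod_fintype _ _ (fun i => pow_zero _), Fin.prod_univ_three]]
        rw [_root_.map_mul, _root_.map_mul, _root_.map_mul, map_pow, map_pow, map_pow]
        have hC : subst (K := K) (Matrix.diagonal s) (C a) = C a := by
          simp [subst, algebraMap_eq]
        rw [hC, diag_X, diag_X, diag_X, mul_pow, mul_pow, mul_pow,
          ← C_pow, ← C_pow, ← C_pow, C_mul, C_mul]
        ring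
      rw [this, coeff_C_mul, coeff_monomial]
      split_ifs with h
      · subst h; ring
      · ring

/-- character value of the sign vector `s` on the exponent `d` -/
noncomputable def chi (s : Fin 3 → ℤ) (d : Fin 3 →₀ ℕ) : K :=
  (s 0 : K) ^ (d 0) * (s 1 : K) ^ (d 1) * (s 2 : K) ^ (d 2)

lemma comb_eq (s₁ s₂ s₃ : Fin 3 → ℤ) (ε₁ ε₂ ε₃ : K) (f : (Fin 3 →₀ ℕ) → K)
    (p : MvPolynomial (Fin 3) K) (hp : p.IsHomogeneous 2)
    (h1 : ∀ d : Fin 3 →₀ ℕ,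
      (d = Ex 0 1 ∨ d = Ex 0 2 ∨ d = Ex 1 2 ∨ d = Dx 0 ∨ d = Dx 1 ∨ d = Dx 2) →
      1 + ε₁ * chi s₁ d + ε₂ * chi s₂ d + ε₃ * chi s₃ d = f d) :
    p + ε₁ • subst (Matrix.diagonal s₁) p + ε₂ • subst (Matrix.diagonal s₂) p
      + ε₃ • subst (Matrix.diagonal s₃) p
    = (f (Ex 0 1) * coeff (Ex 0 1) p) • monomial (Ex 0 1) (1 : K)
      + (f (Ex 0 2) * coeff (Ex 0 2) p) • monomial (Ex 0 2) 1
      + (f (Ex 1 2) * coeff (Ex 1 2) p) • monomial (Ex 1 2) 1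
      + (f (Dx 0) * coeff (Dx 0) p) • monomial (Dx 0) 1
      + (f (Dx 1) * coeff (Dx 1) p) • monomial (Dx 1) 1
      + (f (Dx 2) * coeff (Dx 2) p) • monomial (Dx 2) 1 := by
  apply MvPolynomial.ext
  intro d
  simp only [coeff_add, coeff_smul, coeff_subst_diag, coeff_monomial, smul_eq_mul]
  by_cases hd : d = Ex 0 1 ∨ d = Ex 0 2 ∨ d = Ex 1 2 ∨ d = Dx 0 ∨ d = Dx 1 ∨ d = Dx 2
  · have hfd := h1 d hd
    simp only [chi] at hfd
    rcases hd with rfl|rfl|rfl|rfl|rfl|rfl <;>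
    · simp only [finsupp3_eq_iff, Ex, Dx, Finsupp.add_apply, Finsupp.single_apply,
        Fin.ext_iff] at hfd ⊢
      norm_num at hfd ⊢
      linear_combination coeff _ p * hfd
  · have h0 : coeff d p = 0 := by
      by_contra hc
      exact hd (hom_support hp hc)
    rw [h0]
    have : ∀ e : Fin 3 →₀ ℕ,
        (e = Ex 0 1 ∨ e = Ex 0 2 ∨ e = Ex 1 2 ∨ e = Dx 0 ∨ e = Dx 1 ∨ e = Dx 2) → e ≠ d := by
      rintro e he rfl; exact hd he
    rw [if_neg (this _ (by tauto)), if_neg (this _ (by tauto)), if_neg (this _ (by tauto)),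
      if_neg (this _ (by tauto)), if_neg (this _ (by tauto)), if_neg (this _ (by tauto))]
    ring

lemma elem_sq {i j : Fin 3} (h : i ≠ j) :
    (1 + Matrix.single i j (1 : ℤ)) ^ 2 = 1 + Matrix.single i j 2 := by
  have hz : Matrix.single i j (1 : ℤ) * Matrix.single i j 1 = 0 :=
    Matrix.single_mul_single_of_ne 1 i j i h.symm 1
  have h2 : Matrix.single i j (2 : ℤ)
      = Matrix.single i j 1 + Matrix.single i j 1 := by
    rw [← Matrix.single_add]; norm_num
  have expand : (1 + Matrix.single i j (1:ℤ)) * (1 + Matrix.single i j 1)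
      = 1 + (Matrix.single i j 1 + Matrix.single i j 1)
        + Matrix.single i j 1 * Matrix.single i j 1 := by noncomm_ring
  rw [sq, expand, hz, add_zero, h2]

lemma subst_elem_X {i j : Fin 3} (h : i ≠ j) (k : Fin 3) :
    subst (K := K) ((1 + Matrix.single i j (1 : ℤ)) ^ 2) (X k)
      = X k + if k = i then C 2 * X j else 0 := by
  rw [elem_sq h]
  rw [show subst (K := K) (1 + Matrix.single i j 2) (X k)
      = ∑ l, (((1 + Matrix.single i j 2 : Matrix (Fin 3) (Fin 3) ℤ)) k l : K) • X l
      from aeval_X _ k]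
  have : ∀ l, (((1 + Matrix.single i j 2 : Matrix (Fin 3) (Fin 3) ℤ)) k l : K) • X l
      = ((if k = l then (1:K) else 0) + (if i = k ∧ j = l then (2:K) else 0))
          • (X l : MvPolynomial (Fin 3) K) := by
    intro l
    congr 1
    simp [Matrix.add_apply, Matrix.one_apply, Matrix.single, Matrix.of_apply]
  rw [Finset.sum_congr rfl (fun l _ => this l)]
  simp only [add_smul, Finset.sum_add_distrib, ite_smul, zero_smul, one_smul]
  rw [Finset.sum_ite_eq _ k (fun l => X l)]
  congr 1
  · simp
  · by_cases hk : i = k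
    · subst hk
      simp only [true_and]
      rw [Finset.sum_ite_eq _ j (fun l => (2:K) • X l)]
      simp [if_pos rfl, smul_eq_C_mul]
    · rw [if_neg (fun hh => hk hh.symm)]
      simp [hk]

lemma hXX (a b : Fin 3) : (X a * X b : MvPolynomial (Fin 3) K) = monomial (Ex a b) 1 := by
  rw [X, X, monomial_mul, one_mul]; rfl

lemma hExaa (a : Fin 3) : Ex a a = Dx a := by
  rw [Ex, Dx, ← Finsupp.single_add]

lemma hExsymm (a b : Fin 3) : Ex a b = Ex b a := by rw [Ex, Ex, add_comm]

lemma hXsq (a : Fin 3) : (X a ^ 2 : MvPolynomial (Fin 3) K) = monomial (Dx a) 1 := by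
  rw [sq, hXX, hExaa]

lemma hsq_add (a b : Fin 3) : ((X a + C 2 * X b : MvPolynomial (Fin 3) K))^2
    = monomial (Dx a) 1 + monomial (Ex a b) 4 + monomial (Dx b) 4 := by
  have e1 : ((X a + C 2 * X b : MvPolynomial (Fin 3) K))^2
      = X a * X a + C 2 * (X a * X b) + C 2 * (X b * X a) + (C 2 * C 2) * (X b * X b) := by
    ring
  rw [e1, hXX, hXX, hXX, hXX, ← C_mul, C_mul_monomial, C_mul_monomial, C_mul_monomial,
    hExaa, hExaa, hExsymm b a]
  rw [show (monomial (Dx a) ((1:K)) + monomial (Ex a b) (2*1) + monomial (Ex a b) (2*1)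
      + monomial (Dx b) (2*2*1) : MvPolynomial (Fin 3) K)
    = monomial (Dx a) 1 + (monomial (Ex a b) (2*1) + monomial (Ex a b) (2*1))
      + monomial (Dx b) (2*2*1) by ring, ← map_add]
  norm_num

lemma hmul_l (a b c : Fin 3) : ((X a + C 2 * X b) * X c : MvPolynomial (Fin 3) K)
    = monomial (Ex a c) 1 + monomial (Ex b c) 2 := by
  rw [add_mul, mul_assoc, hXX, hXX, C_mul_monomial]
  norm_num

lemma hmul_r (a b c : Fin 3) : (X a * (X b + C 2 * X c) : MvPolynomial (Fin 3) K)
    = monomial (Ex a b) 1 + monomial (Ex a c) 2 := by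
  rw [mul_add, hXX, mul_left_comm, hXX, C_mul_monomial]
  norm_num

lemma hmono_smul (d : Fin 3 →₀ ℕ) (c : K) :
    monomial d c = c • monomial d (1 : K) := by
  rw [smul_monomial, smul_eq_mul, mul_one]

end Aux


section Proj
variable {K : Type*} [CommRing K]

lemma proj01 (p : MvPolynomial (Fin 3) K) (hp : p.IsHomogeneous 2) :
    p + (1:K) • subst (Matrix.diagonal ![-1,-1,1]) p
      + (-1:K) • subst (Matrix.diagonal ![1,-1,-1]) p
      + (-1:K) • subst (Matrix.diagonal ![-1,1,-1]) p
    = ((4:K) * coeff (Ex 0 1) p) • monomial (Ex 0 1) 1 := by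
  classical
  rw [comb_eq _ _ _ _ _ _ (fun d => if d = Ex 0 1 then (4:K) else 0) p hp ?h1]
  case h1 =>
    rintro d (rfl|rfl|rfl|rfl|rfl|rfl) <;>
    · simp only [chi, Ex, Dx, Finsupp.add_apply, Finsupp.single_apply, Fin.ext_iff,
        finsupp3_eq_iff, Matrix.cons_val_zero, Matrix.cons_val_one, Matrix.head_cons,
          Matrix.cons_val_two, Matrix.tail_cons]
      norm_num
  simp only [finsupp3_eq_iff, Ex, Dx, Finsupp.add_apply, Finsupp.single_apply, Fin.ext_iff]
  norm_num

lemma proj02 (p : MvPolynomial (Fin 3) K) (hp : p.IsHomogeneous 2) :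
    p + (1:K) • subst (Matrix.diagonal ![-1,1,-1]) p
      + (-1:K) • subst (Matrix.diagonal ![1,-1,-1]) p
      + (-1:K) • subst (Matrix.diagonal ![-1,-1,1]) p
    = ((4:K) * coeff (Ex 0 2) p) • monomial (Ex 0 2) 1 := by
  classical
  rw [comb_eq _ _ _ _ _ _ (fun d => if d = Ex 0 2 then (4:K) else 0) p hp ?h1]
  case h1 =>
    rintro d (rfl|rfl|rfl|rfl|rfl|rfl) <;>
    · simp only [chi, Ex, Dx, Finsupp.add_apply, Finsupp.single_apply, Fin.ext_iff,
        finsupp3_eq_iff, Matrix.cons_val_zero, Matrix.cons_val_one, Matrix.head_cons,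
          Matrix.cons_val_two, Matrix.tail_cons]
      norm_num
  simp only [finsupp3_eq_iff, Ex, Dx, Finsupp.add_apply, Finsupp.single_apply, Fin.ext_iff]
  norm_num

lemma proj12 (p : MvPolynomial (Fin 3) K) (hp : p.IsHomogeneous 2) :
    p + (1:K) • subst (Matrix.diagonal ![1,-1,-1]) p
      + (-1:K) • subst (Matrix.diagonal ![-1,1,-1]) p
      + (-1:K) • subst (Matrix.diagonal ![-1,-1,1]) p
    = ((4:K) * coeff (Ex 1 2) p) • monomial (Ex 1 2) 1 := by
  classical
  rw [comb_eq _ _ _ _ _ _ (fun d => if d = Ex 1 2 then (4:K) else 0) p hp ?h1]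
  case h1 =>
    rintro d (rfl|rfl|rfl|rfl|rfl|rfl) <;>
    · simp only [chi, Ex, Dx, Finsupp.add_apply, Finsupp.single_apply, Fin.ext_iff,
        finsupp3_eq_iff, Matrix.cons_val_zero, Matrix.cons_val_one, Matrix.head_cons,
          Matrix.cons_val_two, Matrix.tail_cons]
      norm_num
  simp only [finsupp3_eq_iff, Ex, Dx, Finsupp.add_apply, Finsupp.single_apply, Fin.ext_iff]
  norm_num

lemma projD (p : MvPolynomial (Fin 3) K) (hp : p.IsHomogeneous 2) :
    p + (1:K) • subst (Matrix.diagonal ![1,-1,-1]) p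
      + (1:K) • subst (Matrix.diagonal ![-1,1,-1]) p
      + (1:K) • subst (Matrix.diagonal ![-1,-1,1]) p
    = ((4:K) * coeff (Dx 0) p) • monomial (Dx 0) 1
      + ((4:K) * coeff (Dx 1) p) • monomial (Dx 1) 1
      + ((4:K) * coeff (Dx 2) p) • monomial (Dx 2) 1 := by
  classical
  rw [comb_eq _ _ _ _ _ _
    (fun d => if d = Dx 0 ∨ d = Dx 1 ∨ d = Dx 2 then (4:K) else 0) p hp ?h1]
  case h1 =>
    rintro d (rfl|rfl|rfl|rfl|rfl|rfl) <;>
    · simp only [chi, Ex, Dx, Finsupp.add_apply, Finsupp.single_apply, Fin.ext_iff,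
        finsupp3_eq_iff, Matrix.cons_val_zero, Matrix.cons_val_one, Matrix.head_cons,
          Matrix.cons_val_two, Matrix.tail_cons]
      norm_num
  simp only [finsupp3_eq_iff, Ex, Dx, Finsupp.add_apply, Finsupp.single_apply, Fin.ext_iff]
  norm_num

end Proj


/-- A nonzero subspace of the 6-dimensional space of quadratic forms in
3 variables (char `K ≠ 2`) invariant under all determinant-1 sign matrices and under the
squares of all elementary matrices `Eᵢⱼ(1)` is everything. -/
theorem stmt5 {K : Type*} [Field K] (hK : ringChar K ≠ 2)
    (U : Submodule K (MvPolynomial (Fin 3) K))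
    (hUV : U ≤ MvPolynomial.homogeneousSubmodule (Fin 3) K 2)
    (hne : U ≠ ⊥)
    (hsign : ∀ s : Fin 3 → ℤ, (∀ i, s i = 1 ∨ s i = -1) → (∏ i, s i) = 1 →
      ∀ p ∈ U, subst (Matrix.diagonal s) p ∈ U)
    (helem : ∀ i j : Fin 3, i ≠ j →
      ∀ p ∈ U, subst ((1 + Matrix.single i j (1 : ℤ)) ^ 2) p ∈ U) :
    U = MvPolynomial.homogeneousSubmodule (Fin 3) K 2 := by
  classical
  -- characteristic facts
  have h2K : (2:K) ≠ 0 := by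
    intro h
    rcases (Nat.dvd_prime Nat.prime_two).mp ((ringChar.spec K 2).mp (by exact_mod_cast h)) with h1 | h1
    · have : (1:K) = 0 := by exact_mod_cast (ringChar.spec K 1).mpr (by rw [h1])
      exact one_ne_zero this
    · exact hK h1
  have h4K : (4:K) ≠ 0 := by
    intro h
    exact h2K (mul_self_eq_zero.mp (by rw [show (2:K)*2 = 4 by norm_num, h]))
  have h8K : (8:K) ≠ 0 := by
    intro h
    exact h4K (by
      have h24 : (2:K) * 4 = 8 := by norm_num
      rcases mul_eq_zero.mp (h24.trans h) with hc | hc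
      · exact absurd hc h2K
      · exact hc)
  -- membership helpers
  have hhom : ∀ p ∈ U, MvPolynomial.IsHomogeneous p 2 :=
    fun p hp => (MvPolynomial.mem_homogeneousSubmodule _ _).mp (hUV hp)
  have hsA : ∀ p ∈ U, subst (Matrix.diagonal ![1,-1,-1]) p ∈ U := fun p hp =>
    hsign ![1,-1,-1] (by decide) (by decide) p hp
  have hsB : ∀ p ∈ U, subst (Matrix.diagonal ![-1,1,-1]) p ∈ U := fun p hp =>
    hsign ![-1,1,-1] (by decide) (by decide) p hp
  have hsC : ∀ p ∈ U, subst (Matrix.diagonal ![-1,-1,1]) p ∈ U := fun p hp =>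
    hsign ![-1,-1,1] (by decide) (by decide) p hp
  have cancel : ∀ (c : K), c ≠ 0 → ∀ w : MvPolynomial (Fin 3) K, c • w ∈ U → w ∈ U := by
    intro c hc w hw
    have := U.smul_mem c⁻¹ hw
    rwa [smul_smul, inv_mul_cancel₀ hc, one_smul] at this
  have k01 : ∀ p ∈ U, ((4:K) * coeff (Ex 0 1) p) • monomial (Ex 0 1) (1:K) ∈ U := by
    intro p hp
    rw [← proj01 p (hhom p hp)]
    exact U.add_mem (U.add_mem (U.add_mem hp (U.smul_mem _ (hsC p hp)))
      (U.smul_mem _ (hsA p hp))) (U.smul_mem _ (hsB p hp))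
  have k02 : ∀ p ∈ U, ((4:K) * coeff (Ex 0 2) p) • monomial (Ex 0 2) (1:K) ∈ U := by
    intro p hp
    rw [← proj02 p (hhom p hp)]
    exact U.add_mem (U.add_mem (U.add_mem hp (U.smul_mem _ (hsB p hp)))
      (U.smul_mem _ (hsA p hp))) (U.smul_mem _ (hsC p hp))
  have k12 : ∀ p ∈ U, ((4:K) * coeff (Ex 1 2) p) • monomial (Ex 1 2) (1:K) ∈ U := by
    intro p hp
    rw [← proj12 p (hhom p hp)]
    exact U.add_mem (U.add_mem (U.add_mem hp (U.smul_mem _ (hsA p hp)))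
      (U.smul_mem _ (hsB p hp))) (U.smul_mem _ (hsC p hp))
  have kD : ∀ p ∈ U,
      ((4:K) * coeff (Dx 0) p) • monomial (Dx 0) (1:K)
      + ((4:K) * coeff (Dx 1) p) • monomial (Dx 1) 1
      + ((4:K) * coeff (Dx 2) p) • monomial (Dx 2) 1 ∈ U := by
    intro p hp
    rw [← projD p (hhom p hp)]
    exact U.add_mem (U.add_mem (U.add_mem hp (U.smul_mem _ (hsA p hp)))
      (U.smul_mem _ (hsB p hp))) (U.smul_mem _ (hsC p hp))
  have ext01 : ∀ q ∈ U, coeff (Ex 0 1) q ≠ 0 → monomial (Ex 0 1) (1:K) ∈ U :=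
    fun q hq hc => cancel _ (mul_ne_zero h4K hc) _ (k01 q hq)
  have ext02 : ∀ q ∈ U, coeff (Ex 0 2) q ≠ 0 → monomial (Ex 0 2) (1:K) ∈ U :=
    fun q hq hc => cancel _ (mul_ne_zero h4K hc) _ (k02 q hq)
  have ext12 : ∀ q ∈ U, coeff (Ex 1 2) q ≠ 0 → monomial (Ex 1 2) (1:K) ∈ U :=
    fun q hq hc => cancel _ (mul_ne_zero h4K hc) _ (k12 q hq)
  have substX : ∀ (i j : Fin 3), i ≠ j → ∀ a b : Fin 3,
      subst (K := K) ((1 + Matrix.single i j 1)^2) (monomial (Ex a b) 1)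
      = (X a + if a = i then C 2 * X j else 0) * (X b + if b = i then C 2 * X j else 0) := by
    intro i j hij a b
    rw [← hXX, _root_.map_mul, subst_elem_X hij, subst_elem_X hij]
  have substSq : ∀ (i j : Fin 3), i ≠ j → ∀ a : Fin 3,
      subst (K := K) ((1 + Matrix.single i j 1)^2) (monomial (Dx a) 1)
      = (X a + if a = i then C 2 * X j else 0)^2 := by
    intro i j hij a
    rw [← hXsq, map_pow, subst_elem_X hij]
  have extD0 : ∀ q ∈ U, coeff (Dx 1) q = 0 → coeff (Dx 2) q = 0 → coeff (Dx 0) q ≠ 0 →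
      monomial (Dx 0) (1:K) ∈ U := by
    intro q hq h1 h2 h0
    have h := kD q hq
    rw [h1, h2] at h
    simp only [mul_zero, zero_smul, add_zero, zero_add] at h
    exact cancel _ (mul_ne_zero h4K h0) _ h
  have extD1 : ∀ q ∈ U, coeff (Dx 0) q = 0 → coeff (Dx 2) q = 0 → coeff (Dx 1) q ≠ 0 →
      monomial (Dx 1) (1:K) ∈ U := by
    intro q hq h0 h2 h1
    have h := kD q hq
    rw [h0, h2] at h
    simp only [mul_zero, zero_smul, add_zero, zero_add] at h
    exact cancel _ (mul_ne_zero h4K h1) _ h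
  have extD2 : ∀ q ∈ U, coeff (Dx 0) q = 0 → coeff (Dx 1) q = 0 → coeff (Dx 2) q ≠ 0 →
      monomial (Dx 2) (1:K) ∈ U := by
    intro q hq h0 h1 h2
    have h := kD q hq
    rw [h0, h1] at h
    simp only [mul_zero, zero_smul, add_zero, zero_add] at h
    exact cancel _ (mul_ne_zero h4K h2) _ h
  have h16K : (16:K) ≠ 0 := by
    intro h
    exact h8K (by
      have h28 : (2:K) * 8 = 16 := by norm_num
      rcases mul_eq_zero.mp (h28.trans h) with hc | hc
      · exact absurd hc h2K
      · exact hc)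
  -- steps between monomials
  have step0102 : monomial (Ex 0 1) (1:K) ∈ U → monomial (Ex 0 2) (1:K) ∈ U := by
    intro hm
    have hr : subst (K := K) ((1 + Matrix.single 1 2 1)^2) (monomial (Ex 0 1) 1)
        = monomial (Ex 0 1) 1 + monomial (Ex 0 2) 2 := by
      rw [substX 1 2 (by decide) 0 1, if_neg (by decide), if_pos rfl, add_zero, hmul_r 0 1 2]
    have hrU := helem 1 2 (by decide) _ hm
    rw [hr] at hrU
    apply ext02 _ hrU
    have : coeff (Ex 0 2) (monomial (Ex 0 1) (1:K) + monomial (Ex 0 2) 2) = 2 := by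
      simp [coeff_monomial, finsupp3_eq_iff, Ex, Dx, Finsupp.add_apply,
        Finsupp.single_apply, Fin.ext_iff]
    rw [this]; exact h2K
  have step0112 : monomial (Ex 0 1) (1:K) ∈ U → monomial (Ex 1 2) (1:K) ∈ U := by
    intro hm
    have hr : subst (K := K) ((1 + Matrix.single 0 2 1)^2) (monomial (Ex 0 1) 1)
        = monomial (Ex 0 1) 1 + monomial (Ex 2 1) 2 := by
      rw [substX 0 2 (by decide) 0 1, if_pos rfl, if_neg (by decide), add_zero, hmul_l 0 2 1]
    have hrU := helem 0 2 (by decide) _ hm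
    rw [hr] at hrU
    apply ext12 _ hrU
    have : coeff (Ex 1 2) (monomial (Ex 0 1) (1:K) + monomial (Ex 2 1) 2) = 2 := by
      simp [coeff_monomial, finsupp3_eq_iff, Ex, Dx, Finsupp.add_apply,
        Finsupp.single_apply, Fin.ext_iff]
    rw [this]; exact h2K
  have step0201 : monomial (Ex 0 2) (1:K) ∈ U → monomial (Ex 0 1) (1:K) ∈ U := by
    intro hm
    have hr : subst (K := K) ((1 + Matrix.single 2 1 1)^2) (monomial (Ex 0 2) 1)
        = monomial (Ex 0 2) 1 + monomial (Ex 0 1) 2 := by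
      rw [substX 2 1 (by decide) 0 2, if_neg (by decide), if_pos rfl, add_zero, hmul_r 0 2 1]
    have hrU := helem 2 1 (by decide) _ hm
    rw [hr] at hrU
    apply ext01 _ hrU
    have : coeff (Ex 0 1) (monomial (Ex 0 2) (1:K) + monomial (Ex 0 1) 2) = 2 := by
      simp [coeff_monomial, finsupp3_eq_iff, Ex, Dx, Finsupp.add_apply,
        Finsupp.single_apply, Fin.ext_iff]
    rw [this]; exact h2K
  have step1202 : monomial (Ex 1 2) (1:K) ∈ U → monomial (Ex 0 2) (1:K) ∈ U := by
    intro hm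
    have hr : subst (K := K) ((1 + Matrix.single 1 0 1)^2) (monomial (Ex 1 2) 1)
        = monomial (Ex 1 2) 1 + monomial (Ex 0 2) 2 := by
      rw [substX 1 0 (by decide) 1 2, if_pos rfl, if_neg (by decide), add_zero, hmul_l 1 0 2]
    have hrU := helem 1 0 (by decide) _ hm
    rw [hr] at hrU
    apply ext02 _ hrU
    have : coeff (Ex 0 2) (monomial (Ex 1 2) (1:K) + monomial (Ex 0 2) 2) = 2 := by
      simp [coeff_monomial, finsupp3_eq_iff, Ex, Dx, Finsupp.add_apply,
        Finsupp.single_apply, Fin.ext_iff]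
    rw [this]; exact h2K
  -- squares
  have sqD0 : monomial (Ex 0 1) (1:K) ∈ U → monomial (Dx 0) (1:K) ∈ U := by
    intro hm
    have hr : subst (K := K) ((1 + Matrix.single 1 0 1)^2) (monomial (Ex 0 1) 1)
        = monomial (Ex 0 1) 1 + monomial (Ex 0 0) 2 := by
      rw [substX 1 0 (by decide) 0 1, if_neg (by decide), if_pos rfl, add_zero, hmul_r 0 1 0]
    have hrU := helem 1 0 (by decide) _ hm
    rw [hr] at hrU
    apply extD0 _ hrU <;>
      simp [coeff_monomial, finsupp3_eq_iff, Ex, Dx, Finsupp.add_apply,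
        Finsupp.single_apply, Fin.ext_iff, h2K]
  have sqD1 : monomial (Ex 0 1) (1:K) ∈ U → monomial (Dx 1) (1:K) ∈ U := by
    intro hm
    have hr : subst (K := K) ((1 + Matrix.single 0 1 1)^2) (monomial (Ex 0 1) 1)
        = monomial (Ex 0 1) 1 + monomial (Ex 1 1) 2 := by
      rw [substX 0 1 (by decide) 0 1, if_pos rfl, if_neg (by decide), add_zero, hmul_l 0 1 1]
    have hrU := helem 0 1 (by decide) _ hm
    rw [hr] at hrU
    apply extD1 _ hrU <;>
      simp [coeff_monomial, finsupp3_eq_iff, Ex, Dx, Finsupp.add_apply,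
        Finsupp.single_apply, Fin.ext_iff, h2K]
  have sqD2 : monomial (Ex 0 2) (1:K) ∈ U → monomial (Dx 2) (1:K) ∈ U := by
    intro hm
    have hr : subst (K := K) ((1 + Matrix.single 0 2 1)^2) (monomial (Ex 0 2) 1)
        = monomial (Ex 0 2) 1 + monomial (Ex 2 2) 2 := by
      rw [substX 0 2 (by decide) 0 2, if_pos rfl, if_neg (by decide), add_zero, hmul_l 0 2 2]
    have hrU := helem 0 2 (by decide) _ hm
    rw [hr] at hrU
    apply extD2 _ hrU <;>
      simp [coeff_monomial, finsupp3_eq_iff, Ex, Dx, Finsupp.add_apply,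
        Finsupp.single_apply, Fin.ext_iff, h2K]
  -- getting a first mixed monomial from a nonzero element
  obtain ⟨p, hpU, hpne⟩ := Submodule.exists_mem_ne_zero_of_ne_bot hne
  obtain ⟨d, hd⟩ := MvPolynomial.ne_zero_iff.mp hpne
  have hmix : monomial (Ex 0 1) (1:K) ∈ U ∨ monomial (Ex 0 2) (1:K) ∈ U
      ∨ monomial (Ex 1 2) (1:K) ∈ U := by
    have hq := kD p hpU
    rcases hom_support (hhom p hpU) hd with rfl|rfl|rfl|rfl|rfl|rfl
    · exact Or.inl (ext01 p hpU hd)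
    · exact Or.inr (Or.inl (ext02 p hpU hd))
    · exact Or.inr (Or.inr (ext12 p hpU hd))
    · -- coeff (Dx 0) p ≠ 0
      refine Or.inl ?_
      have hr : subst (K := K) ((1 + Matrix.single 0 1 1)^2)
          (((4:K) * coeff (Dx 0) p) • monomial (Dx 0) 1
            + ((4:K) * coeff (Dx 1) p) • monomial (Dx 1) 1
            + ((4:K) * coeff (Dx 2) p) • monomial (Dx 2) 1)
          = ((4:K) * coeff (Dx 0) p) • (monomial (Dx 0) 1 + monomial (Ex 0 1) 4
              + monomial (Dx 1) 4)
            + ((4:K) * coeff (Dx 1) p) • monomial (Dx 1) 1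
            + ((4:K) * coeff (Dx 2) p) • monomial (Dx 2) 1 := by
        rw [map_add, map_add, _root_.map_smul, _root_.map_smul, _root_.map_smul,
          substSq 0 1 (by decide) 0, substSq 0 1 (by decide) 1, substSq 0 1 (by decide) 2,
          if_pos rfl, if_neg (by decide), if_neg (by decide), add_zero, add_zero,
          hsq_add 0 1, hXsq, hXsq]
      have hrU := helem 0 1 (by decide) _ hq
      rw [hr] at hrU
      apply ext01 _ hrU
      have : coeff (Ex 0 1) (((4:K) * coeff (Dx 0) p) • (monomial (Dx 0) (1:K)
          + monomial (Ex 0 1) 4 + monomial (Dx 1) 4)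
          + ((4:K) * coeff (Dx 1) p) • monomial (Dx 1) 1
          + ((4:K) * coeff (Dx 2) p) • monomial (Dx 2) 1)
          = 16 * coeff (Dx 0) p := by
        simp [coeff_monomial, finsupp3_eq_iff, Ex, Dx, Finsupp.add_apply,
          Finsupp.single_apply, Fin.ext_iff]
        ring
      rw [this]
      exact mul_ne_zero h16K hd
    · -- coeff (Dx 1) p ≠ 0
      refine Or.inl ?_
      have hr : subst (K := K) ((1 + Matrix.single 1 0 1)^2)
          (((4:K) * coeff (Dx 0) p) • monomial (Dx 0) 1
            + ((4:K) * coeff (Dx 1) p) • monomial (Dx 1) 1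
            + ((4:K) * coeff (Dx 2) p) • monomial (Dx 2) 1)
          = ((4:K) * coeff (Dx 0) p) • monomial (Dx 0) 1
            + ((4:K) * coeff (Dx 1) p) • (monomial (Dx 1) 1 + monomial (Ex 1 0) 4
              + monomial (Dx 0) 4)
            + ((4:K) * coeff (Dx 2) p) • monomial (Dx 2) 1 := by
        rw [map_add, map_add, _root_.map_smul, _root_.map_smul, _root_.map_smul,
          substSq 1 0 (by decide) 0, substSq 1 0 (by decide) 1, substSq 1 0 (by decide) 2,
          if_neg (by decide), if_pos rfl, if_neg (by decide), add_zero, add_zero,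
          hsq_add 1 0, hXsq, hXsq]
      have hrU := helem 1 0 (by decide) _ hq
      rw [hr] at hrU
      apply ext01 _ hrU
      have : coeff (Ex 0 1) (((4:K) * coeff (Dx 0) p) • monomial (Dx 0) (1:K)
          + ((4:K) * coeff (Dx 1) p) • (monomial (Dx 1) (1:K)
            + monomial (Ex 1 0) 4 + monomial (Dx 0) 4)
          + ((4:K) * coeff (Dx 2) p) • monomial (Dx 2) 1)
          = 16 * coeff (Dx 1) p := by
        simp [coeff_monomial, finsupp3_eq_iff, Ex, Dx, Finsupp.add_apply,
          Finsupp.single_apply, Fin.ext_iff]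
        ring
      rw [this]
      exact mul_ne_zero h16K hd
    · -- coeff (Dx 2) p ≠ 0
      refine Or.inr (Or.inl ?_)
      have hr : subst (K := K) ((1 + Matrix.single 2 0 1)^2)
          (((4:K) * coeff (Dx 0) p) • monomial (Dx 0) 1
            + ((4:K) * coeff (Dx 1) p) • monomial (Dx 1) 1
            + ((4:K) * coeff (Dx 2) p) • monomial (Dx 2) 1)
          = ((4:K) * coeff (Dx 0) p) • monomial (Dx 0) 1
            + ((4:K) * coeff (Dx 1) p) • monomial (Dx 1) 1
            + ((4:K) * coeff (Dx 2) p) • (monomial (Dx 2) 1 + monomial (Ex 2 0) 4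
              + monomial (Dx 0) 4) := by
        rw [map_add, map_add, _root_.map_smul, _root_.map_smul, _root_.map_smul,
          substSq 2 0 (by decide) 0, substSq 2 0 (by decide) 1, substSq 2 0 (by decide) 2,
          if_neg (by decide), if_neg (by decide), if_pos rfl, add_zero, add_zero,
          hsq_add 2 0, hXsq, hXsq]
      have hrU := helem 2 0 (by decide) _ hq
      rw [hr] at hrU
      apply ext02 _ hrU
      have : coeff (Ex 0 2) (((4:K) * coeff (Dx 0) p) • monomial (Dx 0) (1:K)
          + ((4:K) * coeff (Dx 1) p) • monomial (Dx 1) 1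
          + ((4:K) * coeff (Dx 2) p) • (monomial (Dx 2) (1:K)
            + monomial (Ex 2 0) 4 + monomial (Dx 0) 4))
          = 16 * coeff (Dx 2) p := by
        simp [coeff_monomial, finsupp3_eq_iff, Ex, Dx, Finsupp.add_apply,
          Finsupp.single_apply, Fin.ext_iff]
        ring
      rw [this]
      exact mul_ne_zero h16K hd
  -- all six monomials lie in U
  have hm01 : monomial (Ex 0 1) (1:K) ∈ U := by
    rcases hmix with h | h | h
    · exact h
    · exact step0201 h
    · exact step0201 (step1202 h)
  have hm02 : monomial (Ex 0 2) (1:K) ∈ U := step0102 hm01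
  have hm12 : monomial (Ex 1 2) (1:K) ∈ U := step0112 hm01
  have hmD0 : monomial (Dx 0) (1:K) ∈ U := sqD0 hm01
  have hmD1 : monomial (Dx 1) (1:K) ∈ U := sqD1 hm01
  have hmD2 : monomial (Dx 2) (1:K) ∈ U := sqD2 hm02
  -- conclude
  refine le_antisymm hUV ?_
  intro q hq
  rw [q.as_sum]
  refine Submodule.sum_mem U (fun e he => ?_)
  have hce : coeff e q ≠ 0 := MvPolynomial.mem_support_iff.mp he
  rcases hom_support ((MvPolynomial.mem_homogeneousSubmodule _ _).mp hq) hce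
    with rfl|rfl|rfl|rfl|rfl|rfl
  · rw [hmono_smul]; exact U.smul_mem _ hm01
  · rw [hmono_smul]; exact U.smul_mem _ hm02
  · rw [hmono_smul]; exact U.smul_mem _ hm12
  · rw [hmono_smul]; exact U.smul_mem _ hmD0
  · rw [hmono_smul]; exact U.smul_mem _ hmD1
  · rw [hmono_smul]; exact U.smul_mem _ hmD2
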